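/- Let n ≥ 2, let H and H₀ be n×n real symmetric matrices with H₀ ≠ 0, and let t₀ be a real number. Suppose there is perfect state transfer at time t₀, i.e. |(exp(i t₀ H))₁₂| = 1, and suppose ‖H₀‖·e^{‖H₀‖} ≤ 1. Then 1 − |(exp(i(t₀H + H₀)))₁₂|² ≤ 2‖H₀‖e^{‖H₀‖} − ‖H₀‖²e^{2‖H₀‖} ≤ 2‖H₀‖ + ‖H₀‖² − ‖H₀‖³, where ‖·‖ denotes the operator (spectral) norm. -/

import Mathlib

open Matrix
open scoped Matrix.Norms.L2Operator

set_option maxHeartbeats 1000000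

namespace Stmt5Aux

noncomputable section

variable {n : ℕ}

lemma euclidean_apply_le_norm (y : EuclideanSpace ℂ (Fin n)) (i : Fin n) : ‖y i‖ ≤ ‖y‖ := by
  rw [EuclideanSpace.norm_eq, show ‖y i‖ = Real.sqrt (‖y i‖ ^ 2) from
    (Real.sqrt_sq (norm_nonneg _)).symm]
  exact Real.sqrt_le_sqrt <|
    Finset.single_le_sum (fun k _ => sq_nonneg ‖y k‖) (Finset.mem_univ i)

lemma entry_le_opNorm (M : Matrix (Fin n) (Fin n) ℂ) (i j : Fin n) : ‖M i j‖ ≤ ‖M‖ := by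
  classical
  calc ‖M i j‖
      = ‖((EuclideanSpace.equiv (Fin n) ℂ).symm (M *ᵥ (EuclideanSpace.single j (1:ℂ)))) i‖ := by
        congr 1
        show M i j = (M *ᵥ (EuclideanSpace.single j (1:ℂ))) i
        simp [Matrix.mulVec, dotProduct, EuclideanSpace.single_apply]
    _ ≤ ‖(EuclideanSpace.equiv (Fin n) ℂ).symm (M *ᵥ (EuclideanSpace.single j (1:ℂ)))‖ :=
        euclidean_apply_le_norm _ i
    _ ≤ ‖M‖ * ‖EuclideanSpace.single j (1:ℂ)‖ := M.l2_opNorm_mulVec _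
    _ = ‖M‖ := by rw [EuclideanSpace.norm_single]; simp

lemma map_ofReal_opNorm_le (M : Matrix (Fin n) (Fin n) ℝ) :
    ‖M.map (fun x => (x : ℂ))‖ ≤ ‖M‖ := by
  rw [Matrix.l2_opNorm_def]
  refine ContinuousLinearMap.opNorm_le_bound _ (norm_nonneg M) fun x => ?_
  set Mc := M.map (fun x => (x : ℂ)) with hMc
  show ‖(EuclideanSpace.equiv (Fin n) ℂ).symm (Mc *ᵥ x)‖ ≤ ‖M‖ * ‖x‖
  set a : EuclideanSpace ℝ (Fin n) := (EuclideanSpace.equiv (Fin n) ℝ).symm (fun k => (x k).re)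
    with ha
  set b : EuclideanSpace ℝ (Fin n) := (EuclideanSpace.equiv (Fin n) ℝ).symm (fun k => (x k).im)
    with hb
  have hre : ∀ i, ((Mc *ᵥ x) i).re = (M *ᵥ a) i := by
    intro i
    simp [Mc, Matrix.mulVec, dotProduct, Complex.re_sum, a]
  have him : ∀ i, ((Mc *ᵥ x) i).im = (M *ᵥ b) i := by
    intro i
    simp [Mc, Matrix.mulVec, dotProduct, Complex.im_sum, b]
  have hxsq : ‖x‖ ^ 2 = ‖a‖ ^ 2 + ‖b‖ ^ 2 := by
    rw [EuclideanSpace.norm_eq, EuclideanSpace.norm_eq, EuclideanSpace.norm_eq,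
      Real.sq_sqrt (by positivity), Real.sq_sqrt (by positivity), Real.sq_sqrt (by positivity)]
    rw [← Finset.sum_add_distrib]
    refine Finset.sum_congr rfl fun k _ => ?_
    simp only [a, b]
    rw [Complex.sq_norm, Complex.normSq_apply]
    simp [Real.norm_eq_abs, sq_abs]
    ring
  have hMx : ‖(EuclideanSpace.equiv (Fin n) ℂ).symm (Mc *ᵥ x)‖ ^ 2 =
      ‖(EuclideanSpace.equiv (Fin n) ℝ).symm (M *ᵥ a)‖ ^ 2 +
      ‖(EuclideanSpace.equiv (Fin n) ℝ).symm (M *ᵥ b)‖ ^ 2 := by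
    rw [EuclideanSpace.norm_eq, EuclideanSpace.norm_eq, EuclideanSpace.norm_eq,
      Real.sq_sqrt (by positivity), Real.sq_sqrt (by positivity), Real.sq_sqrt (by positivity)]
    rw [← Finset.sum_add_distrib]
    refine Finset.sum_congr rfl fun k _ => ?_
    show ‖(Mc *ᵥ x) k‖ ^ 2 = ‖(M *ᵥ a) k‖ ^ 2 + ‖(M *ᵥ b) k‖ ^ 2
    rw [Complex.sq_norm, Complex.normSq_apply, hre k, him k]
    simp [Real.norm_eq_abs, sq_abs]
    ring
  have h1 := M.l2_opNorm_mulVec a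
  have h2 := M.l2_opNorm_mulVec b
  have hsq : ‖(EuclideanSpace.equiv (Fin n) ℂ).symm (Mc *ᵥ x)‖ ^ 2 ≤ (‖M‖ * ‖x‖) ^ 2 := by
    rw [hMx]
    have e1 : ‖(EuclideanSpace.equiv (Fin n) ℝ).symm (M *ᵥ a)‖ ^ 2 ≤ (‖M‖ * ‖a‖) ^ 2 :=
      pow_le_pow_left₀ (norm_nonneg _) h1 2
    have e2 : ‖(EuclideanSpace.equiv (Fin n) ℝ).symm (M *ᵥ b)‖ ^ 2 ≤ (‖M‖ * ‖b‖) ^ 2 :=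
      pow_le_pow_left₀ (norm_nonneg _) h2 2
    rw [mul_pow]
    nlinarith [hxsq]
  have h0 : (0:ℝ) ≤ ‖M‖ * ‖x‖ := by positivity
  nlinarith [norm_nonneg ((EuclideanSpace.equiv (Fin n) ℂ).symm (Mc *ᵥ x))]

lemma exp_mem_unitary (A : Matrix (Fin n) (Fin n) ℂ) (hA : Aᴴ = -A) :
    NormedSpace.exp A ∈ unitary (Matrix (Fin n) (Fin n) ℂ) := by
  letI : NormedAlgebra ℚ (Matrix (Fin n) (Fin n) ℂ) := NormedAlgebra.restrictScalars ℚ ℂ _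
  exact NormedSpace.exp_mem_unitary_of_mem_skewAdjoint (by
    rw [skewAdjoint.mem_iff, Matrix.star_eq_conjTranspose, hA])

lemma real_smul_eq (s : ℝ) (M : Matrix (Fin n) (Fin n) ℂ) : s • M = (s : ℂ) • M := by
  ext i j
  simp [Matrix.smul_apply, Complex.real_smul]

lemma smul_skew (s : ℝ) {A : Matrix (Fin n) (Fin n) ℂ} (hA : Aᴴ = -A) :
    (s • A)ᴴ = -(s • A) := by
  rw [real_smul_eq, Matrix.conjTranspose_smul, hA, Complex.star_def, Complex.conj_ofReal,
    smul_neg]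

lemma norm_exp_skew (hn : 2 ≤ n) {A : Matrix (Fin n) (Fin n) ℂ} (hA : Aᴴ = -A) :
    ‖NormedSpace.exp A‖ = 1 := by
  haveI : Nontrivial (Matrix (Fin n) (Fin n) ℂ) := by
    refine ⟨1, 0, fun h => ?_⟩
    have := congr_fun (congr_fun h ⟨0, by omega⟩) ⟨0, by omega⟩
    simpa using this
  exact CStarRing.norm_of_mem_unitary (exp_mem_unitary A hA)

lemma key_perturb (hn : 2 ≤ n) (X Y : Matrix (Fin n) (Fin n) ℂ)
    (hX : Xᴴ = -X) (hY : Yᴴ = -Y) :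
    ‖NormedSpace.exp (X + Y) - NormedSpace.exp X‖ ≤ ‖Y‖ := by
  haveI : Nontrivial (Matrix (Fin n) (Fin n) ℂ) := by
    refine ⟨1, 0, fun h => ?_⟩
    have := congr_fun (congr_fun h ⟨0, by omega⟩) ⟨0, by omega⟩
    simpa using this
  have hXY : (X + Y)ᴴ = -(X + Y) := by
    rw [Matrix.conjTranspose_add, hX, hY, neg_add]
  set F : ℝ → Matrix (Fin n) (Fin n) ℂ :=
    fun s => NormedSpace.exp (s • (-X)) * NormedSpace.exp (s • (X + Y)) with hF
  have hderiv : ∀ s : ℝ, HasDerivAt F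
      (NormedSpace.exp (s • (-X)) * Y * NormedSpace.exp (s • (X + Y))) s := by
    intro s
    have h1 : HasDerivAt (fun u : ℝ => NormedSpace.exp (u • (-X)))
        (NormedSpace.exp (s • (-X)) * (-X)) s := by
      have := hasDerivAt_exp_smul_const (𝕂 := ℝ) (-X) s
      exact this
    have h2 : HasDerivAt (fun u : ℝ => NormedSpace.exp (u • (X + Y)))
        ((X + Y) * NormedSpace.exp (s • (X + Y))) s := by
      have := hasDerivAt_exp_smul_const' (𝕂 := ℝ) (X + Y) s
      exact this
    have h := h1.mul h2
    refine h.congr_deriv ?_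
    set E1 := NormedSpace.exp (s • (-X))
    set E2 := NormedSpace.exp (s • (X + Y))
    have : Y = -X + (X + Y) := by abel
    rw [this]
    noncomm_ring
  have hbound : ∀ s ∈ Set.Icc (0:ℝ) 1,
      ‖NormedSpace.exp (s • (-X)) * Y * NormedSpace.exp (s • (X + Y))‖ ≤ ‖Y‖ := by
    intro s _
    have u1 : ‖NormedSpace.exp (s • (-X))‖ = 1 :=
      norm_exp_skew hn (smul_skew s (by rw [Matrix.conjTranspose_neg, hX, neg_neg]))
    have u2 : ‖NormedSpace.exp (s • (X + Y))‖ = 1 := norm_exp_skew hn (smul_skew s hXY)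
    calc ‖NormedSpace.exp (s • (-X)) * Y * NormedSpace.exp (s • (X + Y))‖
        ≤ ‖NormedSpace.exp (s • (-X)) * Y‖ * ‖NormedSpace.exp (s • (X + Y))‖ :=
          norm_mul_le _ _
      _ ≤ ‖NormedSpace.exp (s • (-X))‖ * ‖Y‖ * ‖NormedSpace.exp (s • (X + Y))‖ :=
          mul_le_mul_of_nonneg_right (norm_mul_le _ _) (norm_nonneg _)
      _ = ‖Y‖ := by rw [u1, u2]; ring
  have hMV := (convex_Icc (0:ℝ) 1).norm_image_sub_le_of_norm_hasDerivWithin_le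
    (fun s _ => (hderiv s).hasDerivWithinAt) hbound
    (Set.left_mem_Icc.2 zero_le_one) (Set.right_mem_Icc.2 zero_le_one)
  have hF0 : F 0 = 1 := by
    simp [hF, NormedSpace.exp_zero]
  have hF1 : F 1 = NormedSpace.exp (-X) * NormedSpace.exp (X + Y) := by
    simp [hF]
  have hinv : NormedSpace.exp X * NormedSpace.exp (-X) = 1 := by
    letI : NormedAlgebra ℚ (Matrix (Fin n) (Fin n) ℂ) := NormedAlgebra.restrictScalars ℚ ℂ _
    rw [← NormedSpace.exp_add_of_commute (Commute.refl X).neg_right, add_neg_cancel,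
      NormedSpace.exp_zero]
  have hfactor : NormedSpace.exp (X + Y) - NormedSpace.exp X =
      NormedSpace.exp X * (F 1 - F 0) := by
    rw [hF0, hF1, mul_sub, mul_one, ← mul_assoc, hinv, one_mul]
  rw [hfactor]
  have hnorm : ‖NormedSpace.exp X * (F 1 - F 0)‖ = ‖F 1 - F 0‖ :=
    CStarRing.norm_mem_unitary_mul (F 1 - F 0) (exp_mem_unitary X hX)
  rw [hnorm]
  calc ‖F 1 - F 0‖ ≤ ‖Y‖ * ‖(1:ℝ) - 0‖ := hMV
    _ = ‖Y‖ := by simp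

end

end Stmt5Aux

open Stmt5Aux

/-- Theorem (edge-weight perturbation bound): if there is perfect state transfer at time
`t₀`, `H₀ ≠ 0` is a real symmetric perturbation with `‖H₀‖ e^{‖H₀‖} ≤ 1`, then
`1 - |(exp(i(t₀H + H₀)))₁₂|² ≤ 2‖H₀‖e^{‖H₀‖} - ‖H₀‖²e^{2‖H₀‖} ≤ 2‖H₀‖ + ‖H₀‖² - ‖H₀‖³`. -/
theorem stmt5 {n : ℕ} (hn : 2 ≤ n) (H H₀ : Matrix (Fin n) (Fin n) ℝ)
    (hH : H.IsSymm) (hH₀ : H₀.IsSymm) (hne : H₀ ≠ 0) (t₀ : ℝ)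
    (hPST : norm
       ((NormedSpace.exp (Complex.I • (t₀ : ℂ) • H.map (fun x => (x : ℂ))))
         ⟨0, by omega⟩ ⟨1, by omega⟩) = 1)
    (hsmall : ‖H₀‖ * Real.exp ‖H₀‖ ≤ 1) :
    1 - norm
        ((NormedSpace.exp (Complex.I • (t₀ • H + H₀).map (fun x => (x : ℂ))))
          ⟨0, by omega⟩ ⟨1, by omega⟩) ^ 2
      ≤ 2 * ‖H₀‖ * Real.exp ‖H₀‖ - ‖H₀‖ ^ 2 * Real.exp (2 * ‖H₀‖)
    ∧ 2 * ‖H₀‖ * Real.exp ‖H₀‖ - ‖H₀‖ ^ 2 * Real.exp (2 * ‖H₀‖)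
      ≤ 2 * ‖H₀‖ + ‖H₀‖ ^ 2 - ‖H₀‖ ^ 3 := by
  set d : ℝ := ‖H₀‖ with hd
  have hd0 : (0:ℝ) ≤ d := norm_nonneg _
  set E : ℝ := Real.exp d with hE
  have hE1 : 1 ≤ E := by rw [hE, ← Real.exp_zero]; exact Real.exp_le_exp.mpr hd0
  have hdu : d ≤ d * E := le_mul_of_one_le_right hd0 hE1
  have hd1 : d ≤ 1 := hdu.trans hsmall
  have hE2d : Real.exp (2 * d) = E * E := by rw [two_mul, Real.exp_add]
  -- the matrices
  set i0 : Fin n := ⟨0, by omega⟩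
  set i1 : Fin n := ⟨1, by omega⟩
  set X : Matrix (Fin n) (Fin n) ℂ := Complex.I • (t₀ : ℂ) • H.map (fun x => (x : ℂ)) with hX
  set Y : Matrix (Fin n) (Fin n) ℂ := Complex.I • H₀.map (fun x => (x : ℂ)) with hY
  have hHermMap : ∀ (M : Matrix (Fin n) (Fin n) ℝ), M.IsSymm →
      (M.map (fun x => (x : ℂ)))ᴴ = M.map (fun x => (x : ℂ)) := by
    intro M hM
    ext i j
    simp only [Matrix.conjTranspose_apply, Matrix.map_apply, Complex.star_def,
      Complex.conj_ofReal]
    exact_mod_cast hM.apply i j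
  have hXs : Xᴴ = -X := by
    rw [hX, Matrix.conjTranspose_smul, Matrix.conjTranspose_smul, hHermMap H hH,
      Complex.star_def, Complex.conj_I, Complex.conj_ofReal, neg_smul]
  have hYs : Yᴴ = -Y := by
    rw [hY, Matrix.conjTranspose_smul, hHermMap H₀ hH₀, Complex.star_def, Complex.conj_I,
      neg_smul]
  have hexp : Complex.I • (t₀ • H + H₀).map (fun x => (x : ℂ)) = X + Y := by
    rw [hX, hY, ← smul_add]
    congr 1
    ext i j
    simp only [Matrix.map_apply, Matrix.add_apply, Matrix.smul_apply, smul_eq_mul]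
    push_cast
    ring
  have hYnorm : ‖Y‖ ≤ d := by
    rw [hY, norm_smul, Complex.norm_I, one_mul, hd]
    exact map_ofReal_opNorm_le H₀
  have hkey := key_perturb hn X Y hXs hYs
  have hentry : ‖(NormedSpace.exp (X + Y)) i0 i1 - (NormedSpace.exp X) i0 i1‖ ≤ d := by
    calc ‖(NormedSpace.exp (X + Y)) i0 i1 - (NormedSpace.exp X) i0 i1‖
        = ‖(NormedSpace.exp (X + Y) - NormedSpace.exp X) i0 i1‖ := by
          rw [Matrix.sub_apply]
      _ ≤ ‖NormedSpace.exp (X + Y) - NormedSpace.exp X‖ :=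
          entry_le_opNorm _ i0 i1
      _ ≤ ‖Y‖ := hkey
      _ ≤ d := hYnorm
  set bC : ℂ := (NormedSpace.exp (X + Y)) i0 i1 with hbC
  set aC : ℂ := (NormedSpace.exp X) i0 i1 with haC
  have haPST : ‖aC‖ = 1 := hPST
  have hb : 1 - d ≤ ‖bC‖ := by
    have h1 : ‖aC‖ - ‖bC‖ ≤ ‖aC - bC‖ := norm_sub_norm_le _ _
    rw [norm_sub_rev] at h1
    rw [haPST] at h1
    have := hentry
    linarith
  constructor
  · -- first inequality
    rw [hexp]
    have hb0 : 0 ≤ ‖bC‖ := norm_nonneg _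
    have hbu : 1 - d * E ≤ ‖bC‖ := by linarith
    have hsq : (1 - d * E) ^ 2 ≤ ‖bC‖ ^ 2 :=
      pow_le_pow_left₀ (by linarith) hbu 2
    rw [hE2d]
    nlinarith
  · -- purely scalar inequality
    have hbnd := Real.exp_bound (x := d) (by rwa [abs_of_nonneg hd0]) (n := 3) (by norm_num)
    rw [abs_of_nonneg hd0] at hbnd
    have h2 := (abs_le.mp hbnd).2
    have hsum : ∑ i ∈ Finset.range 3, d ^ i / (Nat.factorial i : ℝ) = 1 + d + d ^ 2 / 2 := by
      norm_num [Finset.sum_range_succ, Nat.factorial]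
    rw [hsum] at h2
    norm_num [Nat.factorial] at h2
    have hE2 : E ≤ 1 + d + d ^ 2 / 2 + (7/18) * d ^ 3 := by
      nlinarith [pow_nonneg hd0 3]
    have h1pd : 1 + d ≤ E := by
      have := Real.add_one_le_exp d
      rw [hE]; linarith
    rw [hE2d]
    nlinarith [sq_nonneg d, sq_nonneg (d * E), sq_nonneg (1 - d * E), sq_nonneg E,
      mul_nonneg hd0 hd0, sq_nonneg (E - 1 - d), mul_nonneg (mul_nonneg hd0 hd0) hd0]
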